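/- The length of the longest strictly increasing subsequence of a finite sequence r of integers equals the length of the first row of the standard tableau Ins(r) obtained by Schensted row insertion of the entries of r in order (using the row-standard convention: rows strictly increasing, columns non-decreasing). -/

import Mathlib

/-- Schensted row insertion of `x` into a tableau (row-standard convention: rows strictly
increasing, columns non-decreasing). `x` replaces the leftmost entry `≥ x` of the first
row, and the replaced entry is inserted into the rest of the tableau; if no such entry
exists, `x` is appended to the first row. -/
def rowInsert : ℤ → List (List ℤ) → List (List ℤ)
  | x, [] => [[x]]
  | x, r :: rs =>
    match r.findIdx? (fun y => decide (x ≤ y)) with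
    | none => (r ++ [x]) :: rs
    | some j => (r.set j x) :: rowInsert (r.getD j 0) rs

/-- The insertion tableau `Ins(r)` of a sequence `r`, obtained by successively
row-inserting the entries of `r`. -/
def ins (r : List ℤ) : List (List ℤ) :=
  r.foldl (fun T x => rowInsert x T) []

/-- The action of `rowInsert` on the first row only. -/
def step (row : List ℤ) (x : ℤ) : List ℤ :=
  match row.findIdx? (fun y => decide (x ≤ y)) with
  | none => row ++ [x]
  | some j => row.set j x

lemma head_rowInsert (x : ℤ) (T : List (List ℤ)) :
    (rowInsert x T).headD [] = step (T.headD []) x := by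
  cases T with
  | nil => simp [rowInsert, step]
  | cons r rs =>
    cases h : r.findIdx? (fun y => decide (x ≤ y)) <;>
      simp [rowInsert, step, h]

lemma ins_head_aux (r : List ℤ) (T : List (List ℤ)) :
    ((r.foldl (fun T x => rowInsert x T) T).headD []) = r.foldl step (T.headD []) := by
  induction r generalizing T with
  | nil => rfl
  | cons a r ih =>
    simp only [List.foldl_cons]
    rw [ih, head_rowInsert]

lemma ins_head (r : List ℤ) : (ins r).headD [] = r.foldl step [] := by
  simpa [ins] using ins_head_aux r []

/-- The invariant maintained by `step`: the row is strictly increasing, each entry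
`row[j]` is the last entry of some strictly increasing subsequence of `r` of length
`j+1`, and any strictly increasing subsequence of `r` of length `k` ending in `y`
forces `row` to have length at least `k` with `row[k-1] ≤ y`. -/
structure SchenstedInv (r row : List ℤ) : Prop where
  sorted : row.Pairwise (· < ·)
  exist : ∀ j (hj : j < row.length), ∃ s : List ℤ, s.Sublist r ∧ s.Chain' (· < ·) ∧
      s.length = j + 1 ∧ s.getLast? = some row[j]
  bound : ∀ s : List ℤ, ∀ y : ℤ, s.Sublist r → s.Chain' (· < ·) → s.getLast? = some y →
      ∃ h : s.length - 1 < row.length, row[s.length - 1] ≤ y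

lemma chain'_concat_lt {s : List ℤ} {y x : ℤ} (hc : s.Chain' (· < ·))
    (hl : s.getLast? = some y) (hy : y < x) : (s ++ [x]).Chain' (· < ·) := by
  refine List.isChain_append.mpr ?_
  refine ⟨hc, List.isChain_singleton x, ?_⟩
  intro a ha b hb
  simp only [hl, Option.mem_def, Option.some.injEq] at ha
  simp only [List.head?_cons, Option.mem_def, Option.some.injEq] at hb
  subst ha; subst hb; exact hy

lemma inv_step {r row : List ℤ} (x : ℤ) (h : SchenstedInv r row) : SchenstedInv (r ++ [x]) (step row x) := by
  unfold step
  cases hf : row.findIdx? (fun y => decide (x ≤ y)) with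
  | none =>
    rw [List.findIdx?_eq_none_iff] at hf
    have hlt : ∀ y ∈ row, y < x := by
      intro y hy
      have := hf y hy
      simp only [decide_eq_false_iff_not, not_le] at this
      exact this
    refine ⟨?_, ?_, ?_⟩
    · rw [List.pairwise_append]
      refine ⟨h.sorted, List.pairwise_singleton _ _, ?_⟩
      intro a ha b hb
      simp only [List.mem_singleton] at hb
      subst hb
      exact hlt a ha
    · intro j hj
      simp only [List.length_append, List.length_singleton] at hj
      rcases Nat.lt_succ_iff_lt_or_eq.mp hj with hj' | rfl
      · obtain ⟨s, hs, hc, hlen, hlast⟩ := h.exist j hj'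
        refine ⟨s, hs.trans (List.sublist_append_left r [x]), hc, hlen, ?_⟩
        rw [List.getElem_append_left hj']
        exact hlast
      · have hget : (row ++ [x])[row.length]'(by simp) = x := by
          simp
        rcases Nat.eq_zero_or_pos row.length with h0 | hpos
        · refine ⟨[x], (List.sublist_append_right r [x]), List.isChain_singleton x, by simp [h0], ?_⟩
          rw [hget]; rfl
        · obtain ⟨s, hs, hc, hlen, hlast⟩ := h.exist (row.length - 1) (by omega)
          refine ⟨s ++ [x], ?_, ?_, by simp [hlen]; omega, ?_⟩
          · exact List.Sublist.append hs (List.Sublist.refl [x])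
          · exact chain'_concat_lt hc hlast (hlt _ (List.getElem_mem _))
          · rw [hget, List.getLast?_concat]
    · intro s y hs hc hlast
      rcases List.sublist_append_iff.mp hs with ⟨s₁, s₂, rfl, h₁, h₂⟩
      rcases List.sublist_singleton.mp h₂ with rfl | rfl
      · simp only [List.append_nil] at hc hlast ⊢
        obtain ⟨hl, hb⟩ := h.bound s₁ y h₁ hc hlast
        refine ⟨by simp; omega, ?_⟩
        rw [List.getElem_append_left hl]
        exact hb
      · obtain rfl : x = y := by
          rw [List.getLast?_concat] at hlast
          exact Option.some_inj.mp hlast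
        have hslen : (s₁ ++ [x]).length - 1 = s₁.length := by simp
        rcases List.eq_nil_or_concat s₁ with rfl | _
        · refine ⟨by simp, ?_⟩
          simp only [hslen]
          rcases row with _ | ⟨a, row'⟩
          · simp
          · simp only [List.cons_append, List.getElem_cons_zero, List.length_nil]
            exact le_of_lt (hlt a List.mem_cons_self)
        · have hne : s₁ ≠ [] := by rintro rfl; simp_all
          obtain ⟨z, hz⟩ : ∃ z, s₁.getLast? = some z := by
            cases hzz : s₁.getLast? with
            | none => exact absurd (List.getLast?_eq_none_iff.mp hzz) hne
            | some z => exact ⟨z, rfl⟩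
          have hc₁ : s₁.Chain' (· < ·) := (List.isChain_append.mp hc).1
          have hzx : z < x := by
            have := (List.isChain_append.mp hc).2.2 z (by simp [hz]) x (by simp)
            exact this
          obtain ⟨hl, hb⟩ := h.bound s₁ z h₁ hc₁ hz
          have h1 : 1 ≤ s₁.length := List.length_pos_iff.mpr hne
          have hlen1 : s₁.length ≤ row.length := by omega
          refine ⟨by simp; omega, ?_⟩
          simp only [hslen]
          rcases lt_or_eq_of_le hlen1 with hlt' | heq
          · rw [List.getElem_append_left hlt']
            exact le_of_lt (hlt _ (List.getElem_mem _))
          · have : (row ++ [x])[s₁.length]'(by simp; omega) = x := by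
              simp [heq]
            rw [this]
  | some j =>
    rw [List.findIdx?_eq_some_iff_getElem] at hf
    obtain ⟨hj, hpj, hprev⟩ := hf
    have hxj : x ≤ row[j] := by simpa using hpj
    have hlo : ∀ i (hi : i < j), row[i]'(lt_trans hi hj) < x := by
      intro i hi
      have := hprev i hi
      simp only [decide_eq_true_eq] at this
      exact lt_of_not_ge this
    have hsort := List.pairwise_iff_getElem.mp h.sorted
    have hptwise : ∀ i (hi : i < row.length),
        (row.set j x)[i]'(by simpa using hi) ≤ row[i] := by
      intro i hi
      rw [List.getElem_set]
      split
      · next heq => subst heq; exact hxj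
      · exact le_refl _
    refine ⟨?_, ?_, ?_⟩
    · rw [List.pairwise_iff_getElem]
      intro a b ha hb hab
      simp only [List.length_set] at ha hb
      rw [List.getElem_set, List.getElem_set]
      by_cases haj : j = a
      · subst haj
        have hbj : ¬ (j = b) := by omega
        simp only [if_pos rfl, if_neg hbj]
        exact lt_of_le_of_lt hxj (hsort j b ha hb hab)
      · by_cases hbj : j = b
        · subst hbj
          simp only [if_neg haj, if_pos rfl]
          exact hlo a (by omega)
        · simp only [if_neg haj, if_neg hbj]
          exact hsort a b ha hb hab
    · intro i hi
      rw [List.length_set] at hi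
      by_cases hij : j = i
      · subst hij
        have hget : (row.set j x)[j]'(by simpa using hj) = x := by
          rw [List.getElem_set, if_pos rfl]
        rcases Nat.eq_zero_or_pos j with rfl | hjpos
        · exact ⟨[x], List.sublist_append_right r [x], List.isChain_singleton x, rfl,
            by rw [hget]; rfl⟩
        · obtain ⟨s, hs, hc, hlen, hlast⟩ := h.exist (j - 1) (by omega)
          refine ⟨s ++ [x], List.Sublist.append hs (List.Sublist.refl [x]), ?_,
            by simp [hlen]; omega, by rw [hget, List.getLast?_concat]⟩
          exact chain'_concat_lt hc hlast (hlo (j - 1) (by omega))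
      · obtain ⟨s, hs, hc, hlen, hlast⟩ := h.exist i hi
        refine ⟨s, hs.trans (List.sublist_append_left r [x]), hc, hlen, ?_⟩
        rw [List.getElem_set, if_neg hij]
        exact hlast
    · intro s y hs hc hlast
      rcases List.sublist_append_iff.mp hs with ⟨s₁, s₂, rfl, h₁, h₂⟩
      rcases List.sublist_singleton.mp h₂ with rfl | rfl
      · simp only [List.append_nil] at hc hlast ⊢
        obtain ⟨hl, hb⟩ := h.bound s₁ y h₁ hc hlast
        refine ⟨by simpa using hl, ?_⟩
        exact le_trans (hptwise _ hl) hb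
      · obtain rfl : x = y := by
          rw [List.getLast?_concat] at hlast
          exact Option.some_inj.mp hlast
        have hslen : (s₁ ++ [x]).length - 1 = s₁.length := by simp
        rcases List.eq_nil_or_concat s₁ with rfl | _
        · refine ⟨by simp; omega, ?_⟩
          simp only [hslen, List.nil_append, List.length_nil]
          rw [List.getElem_set]
          split
          · exact le_refl x
          · next h0 =>
              simp only [List.nil_append, List.length_cons, List.length_nil] at h0
              exact le_of_lt (hlo 0 (by omega))
        · have hne : s₁ ≠ [] := by rintro rfl; simp_all
          obtain ⟨z, hz⟩ : ∃ z, s₁.getLast? = some z := by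
            cases hzz : s₁.getLast? with
            | none => exact absurd (List.getLast?_eq_none_iff.mp hzz) hne
            | some z => exact ⟨z, rfl⟩
          have hc₁ : s₁.Chain' (· < ·) := (List.isChain_append.mp hc).1
          have hzx : z < x :=
            (List.isChain_append.mp hc).2.2 z (by simp [hz]) x (by simp)
          obtain ⟨hl, hb⟩ := h.bound s₁ z h₁ hc₁ hz
          have h1 : 1 ≤ s₁.length := List.length_pos_iff.mpr hne
          -- claim s₁.length ≤ j
          have hjle : s₁.length ≤ j := by
            by_contra hcon
            push_neg at hcon
            have h2 : j ≤ s₁.length - 1 := by omega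
            have : row[j] ≤ row[s₁.length - 1] := by
              rcases lt_or_eq_of_le h2 with h3 | h3
              · exact le_of_lt (hsort j (s₁.length - 1) hj hl h3)
              · subst h3; exact le_refl _
            have : row[j] < x := lt_of_le_of_lt this (lt_of_le_of_lt hb hzx)
            exact absurd hxj (not_le.mpr this)
          refine ⟨by simp only [hslen, List.length_set]; omega, ?_⟩
          simp only [hslen]
          rw [List.getElem_set]
          split
          · exact le_refl x
          · next hne2 =>
            have : s₁.length < j := lt_of_le_of_ne hjle (fun e => hne2 e.symm)
            exact le_of_lt (hlo s₁.length this)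

lemma inv_foldl (r : List ℤ) : SchenstedInv r (r.foldl step []) := by
  induction r using List.reverseRecOn with
  | nil =>
    refine ⟨List.Pairwise.nil, ?_, ?_⟩
    · intro j hj; simp at hj
    · intro s y hs _ hlast
      rw [List.sublist_nil.mp hs] at hlast
      simp at hlast
  | append_singleton r x ih =>
    rw [List.foldl_append]
    exact inv_step x ih

/-- Schensted's theorem: the length of the first row of `Ins(r)` is the greatest length of
a strictly increasing subsequence of `r`. -/
theorem schensted (r : List ℤ) :
    IsGreatest {k | ∃ s : List ℤ, s.Sublist r ∧ s.Chain' (· < ·) ∧ s.length = k}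
      ((ins r).headD []).length := by
  rw [ins_head]
  have inv := inv_foldl r
  constructor
  · rcases Nat.eq_zero_or_pos (r.foldl step []).length with h0 | hpos
    · exact ⟨[], List.nil_sublist r, List.isChain_nil, by simp [h0]⟩
    · obtain ⟨s, hs, hc, hlen, _⟩ := inv.exist ((r.foldl step []).length - 1) (by omega)
      exact ⟨s, hs, hc, by omega⟩
  · rintro k ⟨s, hs, hc, rfl⟩
    cases hls : s.getLast? with
    | none =>
      rw [List.getLast?_eq_none_iff.mp hls]
      simp
    | some y =>
      obtain ⟨h1, _⟩ := inv.bound s y hs hc hls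
      omega
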